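/- Let n ≥ 1 and let φ ∈ L^∞((0,∞)). Define α(ε) = ∫_0^1 φ(t) ∫_{{y ∈ ℝ^n : |y| < ε}} ∂^2/∂y_1^2 ( e^{-|y|^2/(4t)} / (2√(π t))^n ) dy dt for ε > 0. Then there exists a constant C > 0 (depending only on n and the L^∞ norm of φ) such that |α(ε)| ≤ C for every ε > 0. -/

import Mathlib

open Real MeasureTheory Set
open scoped ENNReal

/-- The Gauss–Weierstrass kernel `e^{-|y|²/(4t)}/(2√(πt))^n` on `ℝ^n`. -/
noncomputable def gaussKer (n : ℕ) (t : ℝ) (y : Fin n → ℝ) : ℝ :=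
  Real.exp (-(∑ j, y j ^ 2) / (4 * t)) / (2 * Real.sqrt (π * t)) ^ n

/-- The second partial derivative `∂²/∂y₁²` of the Gauss–Weierstrass kernel. -/
noncomputable def d2GaussKer (n : ℕ) (hn : 0 < n) (t : ℝ) (y : Fin n → ℝ) : ℝ :=
  deriv (deriv (fun v : ℝ => gaussKer n t (Function.update y ⟨0, hn⟩ v))) (y ⟨0, hn⟩)

/-- `α(ε) = ∫_0^1 φ(t) ∫_{|y|<ε} ∂²/∂y₁² (e^{-|y|²/(4t)}/(2√(πt))^n) dy dt`. -/
noncomputable def alphaFun (n : ℕ) (hn : 0 < n) (φ : ℝ → ℝ) (ε : ℝ) : ℝ :=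
  ∫ t in Ioc (0 : ℝ) 1, φ t *
    ∫ y in {y : Fin n → ℝ | Real.sqrt (∑ j, y j ^ 2) < ε}, d2GaussKer n hn t y

namespace AlphaAux

lemma hasDerivAt_f1 {t : ℝ} (ht : t ≠ 0) (c D v : ℝ) :
    HasDerivAt (fun v : ℝ => Real.exp (-(v^2 + c) / (4*t)) / D)
      (-(v/(2*t)) * (Real.exp (-(v^2 + c) / (4*t)) / D)) v := by
  have h1 : HasDerivAt (fun v : ℝ => -(v^2 + c) / (4*t)) (-(2*v)/(4*t)) v := by
    simpa using ((hasDerivAt_pow 2 v).add_const c).neg.div_const (4*t)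
  have h2 := (h1.exp).div_const D
  refine h2.congr_deriv ?_
  field_simp
  ring

lemma hasDerivAt_f2 {t : ℝ} (ht : t ≠ 0) (c D v : ℝ) :
    HasDerivAt (fun v : ℝ => -(v/(2*t)) * (Real.exp (-(v^2 + c) / (4*t)) / D))
      ((v^2/(4*t^2) - 1/(2*t)) * (Real.exp (-(v^2 + c) / (4*t)) / D)) v := by
  have h0 : HasDerivAt (fun v : ℝ => -(v/(2*t))) (-(1/(2*t))) v := by
    exact ((hasDerivAt_id v).div_const (2*t)).neg
  have := h0.mul (hasDerivAt_f1 ht c D v)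
  refine this.congr_deriv ?_
  have hvv : v^2/(4*t^2) = (v/(2*t)) * (v/(2*t)) := by
    field_simp; ring
  rw [hvv]; ring

lemma d2GaussKer_eq {m : ℕ} (hn : 0 < m+1) {t : ℝ} (ht : 0 < t) (y : Fin (m+1) → ℝ) :
    d2GaussKer (m+1) hn t y = ((y 0)^2/(4*t^2) - 1/(2*t)) * gaussKer (m+1) t y := by
  have hzero : (⟨0, hn⟩ : Fin (m+1)) = 0 := by ext; simp
  set D := (2*Real.sqrt (π*t))^(m+1) with hD
  set c := (∑ j, (y j)^2) - (y 0)^2 with hc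
  have hsum : ∀ v : ℝ, ∑ j, (Function.update y 0 v j)^2 = v^2 + c := by
    intro v
    have h1 : ∀ j, (Function.update y 0 v j)^2
        = Function.update (fun j => (y j)^2) 0 (v^2) j := by
      intro j
      exact (Function.apply_update (fun _ x => x^2) y 0 v j)
    simp_rw [h1]
    rw [Finset.sum_update_of_mem (Finset.mem_univ 0)]
    have h2 : ∑ j, (y j)^2 = (y 0)^2 + ∑ j ∈ Finset.univ.erase 0, (y j)^2 :=
      (Finset.add_sum_erase _ _ (Finset.mem_univ 0)).symm
    rw [Finset.erase_eq] at h2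
    rw [hc]
    linarith [h2]
  have key : (fun v : ℝ => gaussKer (m+1) t (Function.update y ⟨0, hn⟩ v))
      = fun v => Real.exp (-(v^2 + c) / (4*t)) / D := by
    funext v
    rw [hzero]
    unfold gaussKer
    rw [hsum v]
  have hd1 : deriv (fun v : ℝ => Real.exp (-(v^2 + c) / (4*t)) / D)
      = fun v => -(v/(2*t)) * (Real.exp (-(v^2 + c) / (4*t)) / D) :=
    funext fun v => (hasDerivAt_f1 ht.ne' c D v).deriv
  have : d2GaussKer (m+1) hn t y
      = ((y 0)^2/(4*t^2) - 1/(2*t)) * (Real.exp (-((y 0)^2 + c) / (4*t)) / D) := by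
    unfold d2GaussKer
    rw [key, hd1, hzero]
    exact (hasDerivAt_f2 ht.ne' c D (y 0)).deriv
  rw [this]
  congr 1
  unfold gaussKer
  rw [hc, hD]
  ring_nf

lemma slice_integral {t : ℝ} (ht : 0 < t) (D c : ℝ) {r : ℝ} (hr : 0 < r) :
    ∫ v in Ioo (-(Real.sqrt r)) (Real.sqrt r),
        (v^2/(4*t^2) - 1/(2*t)) * (Real.exp (-(v^2 + c) / (4*t)) / D)
      = -(Real.sqrt r / t) * (Real.exp (-(r + c)/(4*t)) / D) := by
  set a := Real.sqrt r with ha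
  have ha0 : 0 < a := Real.sqrt_pos.2 hr
  have haa : a^2 = r := Real.sq_sqrt hr.le
  have hle : -a ≤ a := by linarith
  have hcont : Continuous fun v : ℝ =>
      (v^2/(4*t^2) - 1/(2*t)) * (Real.exp (-(v^2 + c) / (4*t)) / D) := by fun_prop
  have hFTC := intervalIntegral.integral_eq_sub_of_hasDerivAt
    (f := fun v : ℝ => -(v/(2*t)) * (Real.exp (-(v^2 + c) / (4*t)) / D))
    (f' := fun v : ℝ => (v^2/(4*t^2) - 1/(2*t)) * (Real.exp (-(v^2 + c) / (4*t)) / D))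
    (a := -a) (b := a)
    (fun x _ => hasDerivAt_f2 ht.ne' c D x) (hcont.intervalIntegrable _ _)
  rw [← integral_Ioc_eq_integral_Ioo, ← intervalIntegral.integral_of_le hle, hFTC]
  rw [show ((-a)^2 : ℝ) = a^2 by ring, haa]
  field_simp
  ring

noncomputable def Wfun (m : ℕ) (ε : ℝ) : ℝ :=
  ∫ w in {w : Fin m → ℝ | ∑ j, w j ^ 2 < ε^2}, Real.sqrt (ε^2 - ∑ j, w j ^ 2)

noncomputable def gfun (m : ℕ) (ε t : ℝ) : ℝ :=
  Real.exp (-ε^2/(4*t)) / (t * (2*Real.sqrt (π*t))^(m+1))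

lemma inner_integral_eq {m : ℕ} (hn : 0 < m+1) {t ε : ℝ} (ht : 0 < t) (hε : 0 < ε) :
    ∫ y in {y : Fin (m+1) → ℝ | Real.sqrt (∑ j, y j ^ 2) < ε}, d2GaussKer (m+1) hn t y
      = -(Real.exp (-ε^2/(4*t)) / (t * (2*Real.sqrt (π*t))^(m+1))) * Wfun m ε := by
  have hD0 : (0:ℝ) < (2*Real.sqrt (π*t))^(m+1) := by
    have : (0:ℝ) < Real.sqrt (π*t) := Real.sqrt_pos.2 (by positivity)
    positivity
  set D := (2*Real.sqrt (π*t))^(m+1) with hD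
  set E : ℝ × (Fin m → ℝ) → ℝ := fun p =>
    (p.1^2/(4*t^2) - 1/(2*t)) * (Real.exp (-(p.1^2 + ∑ j, p.2 j ^ 2) / (4*t)) / D) with hE
  set T : Set (ℝ × (Fin m → ℝ)) := {p | p.1^2 + ∑ j, p.2 j ^ 2 < ε^2} with hT
  set e : (Fin (m+1) → ℝ) ≃ᵐ ℝ × (Fin m → ℝ) :=
    MeasurableEquiv.piFinSuccAbove (fun _ : Fin (m+1) => ℝ) 0 with he
  have hmp : MeasurePreserving e :=
    volume_preserving_piFinSuccAbove (fun _ : Fin (m+1) => ℝ) 0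
  -- the ball as a preimage
  have hsetpre : {y : Fin (m+1) → ℝ | Real.sqrt (∑ j, y j ^ 2) < ε} = e ⁻¹' T := by
    ext y
    simp only [mem_setOf_eq, mem_preimage, he, hT,
      MeasurableEquiv.piFinSuccAbove_apply]
    rw [Real.sqrt_lt' hε]
    constructor
    · intro h
      rw [Fin.sum_univ_succ] at h
      simpa [Fin.succAbove_zero, Fin.tail] using h
    · intro h
      rw [Fin.sum_univ_succ]
      simpa [Fin.succAbove_zero, Fin.tail] using h
  -- the integrand transported
  have hfun : ∀ y : Fin (m+1) → ℝ, d2GaussKer (m+1) hn t y = E (e y) := by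
    intro y
    rw [d2GaussKer_eq hn ht y]
    simp only [hE, he, MeasurableEquiv.piFinSuccAbove_apply]
    unfold gaussKer
    rw [Fin.sum_univ_succ]
    simp only [Fin.insertNthEquiv_symm_apply, Fin.removeNth, Fin.zero_succAbove, hD]
  have hTmeas : MeasurableSet T := by
    have hc : Continuous fun p : ℝ × (Fin m → ℝ) => p.1^2 + ∑ j, p.2 j ^ 2 := by fun_prop
    exact measurableSet_lt hc.measurable measurable_const
  -- integrability of the indicator on the product space
  have hb : (0:ℝ) < 1/(4*t) := by positivity
  have hexp : Integrable fun x : ℝ => Real.exp (-(1/(4*t)) * x^2) :=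
    integrable_exp_neg_mul_sq hb
  have hsq : Integrable fun x : ℝ => x^2 * Real.exp (-(1/(4*t)) * x^2) := by
    have h := integrable_rpow_mul_exp_neg_mul_sq hb (by norm_num : (-1:ℝ) < 2)
    have : ∀ x : ℝ, x ^ (2:ℝ) = x ^ (2:ℕ) := fun x => by
      rw [show (2:ℝ) = ((2:ℕ):ℝ) by norm_num, Real.rpow_natCast]
    simpa [this] using h
  have hP : Integrable (fun v : ℝ =>
      (v^2 * Real.exp (-(1/(4*t)) * v^2)) * (1/(4*t^2*D))
        - Real.exp (-(1/(4*t)) * v^2) * (1/(2*t*D))) :=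
    (hsq.mul_const _).sub (hexp.mul_const _)
  have hQ : Integrable (fun w : Fin m → ℝ => ∏ j, Real.exp (-(1/(4*t)) * (w j)^2)) :=
    Integrable.fin_nat_prod (fun _ => integrable_exp_neg_mul_sq hb)
  have hEPQ : E = fun p => ((p.1^2 * Real.exp (-(1/(4*t)) * p.1^2)) * (1/(4*t^2*D))
        - Real.exp (-(1/(4*t)) * p.1^2) * (1/(2*t*D)))
      * ∏ j, Real.exp (-(1/(4*t)) * (p.2 j)^2) := by
    funext p
    have h1 : ∀ j, Real.exp (-(1/(4*t)) * (p.2 j)^2)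
        = Real.exp (-(1/(4*t)) * (p.2 j)^2) := fun _ => rfl
    rw [← Real.exp_sum]
    have h2 : ∑ j, -(1/(4*t)) * (p.2 j)^2 = -(1/(4*t)) * ∑ j, (p.2 j)^2 := by
      rw [Finset.mul_sum]
    rw [h2, hE]
    simp only []
    rw [show -(p.1^2 + ∑ j, p.2 j ^ 2) / (4*t)
        = -(1/(4*t)) * p.1^2 + -(1/(4*t)) * ∑ j, (p.2 j)^2 by field_simp; ring,
      Real.exp_add]
    field_simp
  have hEint : Integrable E (volume.prod volume) := by
    rw [hEPQ]
    exact hP.mul_prod hQ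
  have hindInt : Integrable (T.indicator E) (volume.prod volume) := hEint.indicator hTmeas
  -- main computation
  calc ∫ y in {y : Fin (m+1) → ℝ | Real.sqrt (∑ j, y j ^ 2) < ε}, d2GaussKer (m+1) hn t y
      = ∫ x in e ⁻¹' T, E (e x) := by
        rw [hsetpre]
        exact setIntegral_congr_fun (hTmeas.preimage e.measurable) (fun y _ => hfun y)
    _ = ∫ p in T, E p := hmp.setIntegral_preimage_emb e.measurableEmbedding E T
    _ = ∫ p, T.indicator E p ∂(volume.prod volume) := by
        rw [integral_indicator hTmeas]
        rfl
    _ = ∫ w, ∫ v, T.indicator E (v, w) := integral_prod_symm _ hindInt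
    _ = -(Real.exp (-ε^2/(4*t)) / (t * D)) * Wfun m ε := by
        have hS'meas : MeasurableSet {w : Fin m → ℝ | ∑ j, w j ^ 2 < ε^2} := by
          have hc : Continuous fun w : Fin m → ℝ => ∑ j, w j ^ 2 := by fun_prop
          exact measurableSet_lt hc.measurable measurable_const
        have hslice : ∀ w : Fin m → ℝ, (∫ v, T.indicator E (v, w))
            = Set.indicator {w : Fin m → ℝ | ∑ j, w j ^ 2 < ε^2}
                (fun w => -(Real.exp (-ε^2/(4*t)) / (t * D)) * Real.sqrt (ε^2 - ∑ j, w j ^ 2)) w := by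
          intro w
          have hcc : (0:ℝ) ≤ ∑ j, w j ^ 2 := by positivity
          by_cases hlt : ∑ j, w j ^ 2 < ε^2
          · have hr : (0:ℝ) < ε^2 - ∑ j, w j ^ 2 := by linarith
            have hind : (fun v : ℝ => T.indicator E (v, w))
                = (Ioo (-(Real.sqrt (ε^2 - ∑ j, w j ^ 2)))
                    (Real.sqrt (ε^2 - ∑ j, w j ^ 2))).indicator (fun v => E (v, w)) := by
              funext v
              have hmem : ((v, w) ∈ T) ↔ v ∈ Ioo (-(Real.sqrt (ε^2 - ∑ j, w j ^ 2)))
                  (Real.sqrt (ε^2 - ∑ j, w j ^ 2)) := by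
                simp only [hT, mem_setOf_eq, mem_Ioo]
                have haa : (Real.sqrt (ε^2 - ∑ j, w j ^ 2))^2 = ε^2 - ∑ j, w j ^ 2 :=
                  Real.sq_sqrt hr.le
                have ha0 : 0 ≤ Real.sqrt (ε^2 - ∑ j, w j ^ 2) := Real.sqrt_nonneg _
                constructor
                · intro h
                  constructor
                  · nlinarith
                  · nlinarith
                · rintro ⟨h1, h2⟩
                  nlinarith
              simp only [Set.indicator_apply]
              rw [if_congr hmem rfl rfl]
            rw [hind, integral_indicator measurableSet_Ioo]
            have hEvw : (fun v : ℝ => E (v, w)) = fun v =>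
                (v^2/(4*t^2) - 1/(2*t)) * (Real.exp (-(v^2 + ∑ j, w j ^ 2) / (4*t)) / D) := rfl
            rw [hEvw, slice_integral ht D (∑ j, w j ^ 2) hr, Set.indicator_of_mem (show w ∈ {w : Fin m → ℝ | ∑ j, w j ^ 2 < ε^2} from hlt),
              show ε^2 - (∑ j, w j ^ 2) + (∑ j, w j ^ 2) = ε^2 from by ring]
            field_simp
          · have hind : (fun v : ℝ => T.indicator E (v, w)) = fun _ => (0:ℝ) := by
              funext v
              apply Set.indicator_of_notMem
              simp only [hT, mem_setOf_eq, not_lt]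
              nlinarith [sq_nonneg v]
            rw [hind, integral_zero, Set.indicator_of_notMem (show w ∉ {w : Fin m → ℝ | ∑ j, w j ^ 2 < ε^2} from hlt)]
        calc ∫ w, ∫ v, T.indicator E (v, w)
            = ∫ w, Set.indicator {w : Fin m → ℝ | ∑ j, w j ^ 2 < ε^2}
                (fun w => -(Real.exp (-ε^2/(4*t)) / (t * D)) * Real.sqrt (ε^2 - ∑ j, w j ^ 2)) w :=
              integral_congr_ae (Filter.Eventually.of_forall hslice)
          _ = ∫ w in {w : Fin m → ℝ | ∑ j, w j ^ 2 < ε^2},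
                -(Real.exp (-ε^2/(4*t)) / (t * D)) * Real.sqrt (ε^2 - ∑ j, w j ^ 2) :=
              integral_indicator hS'meas
          _ = -(Real.exp (-ε^2/(4*t)) / (t * D)) * Wfun m ε := by
              unfold Wfun
              exact integral_const_mul _ _

lemma Smeas (m : ℕ) (ε : ℝ) : MeasurableSet {w : Fin m → ℝ | ∑ j, w j ^ 2 < ε^2} := by
  have hc : Continuous fun w : Fin m → ℝ => ∑ j, w j ^ 2 := by fun_prop
  exact measurableSet_lt hc.measurable measurable_const

lemma Wfun_nonneg (m : ℕ) (ε : ℝ) : 0 ≤ Wfun m ε :=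
  setIntegral_nonneg (Smeas m ε) (fun _ _ => Real.sqrt_nonneg _)

lemma vol_S_lt_top (m : ℕ) {ε : ℝ} (hε : 0 < ε) :
    volume {w : Fin m → ℝ | ∑ j, w j ^ 2 < ε^2} ≤ (ENNReal.ofReal (2*ε))^m := by
  have hsub : {w : Fin m → ℝ | ∑ j, w j ^ 2 < ε^2} ⊆ Set.pi univ (fun _ => Ioo (-ε) ε) := by
    intro w hw
    simp only [mem_setOf_eq] at hw
    intro j _
    have h1 : (w j)^2 ≤ ∑ i, w i ^ 2 :=
      Finset.single_le_sum (fun i _ => sq_nonneg (w i)) (Finset.mem_univ j)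
    constructor
    · nlinarith
    · nlinarith
  calc volume {w : Fin m → ℝ | ∑ j, w j ^ 2 < ε^2}
      ≤ volume (Set.pi univ (fun _ : Fin m => Ioo (-ε) ε)) := measure_mono hsub
    _ = ∏ _j : Fin m, volume (Ioo (-ε) ε) := volume_pi_pi _
    _ = (ENNReal.ofReal (2*ε))^m := by
        rw [Real.volume_Ioo]
        rw [Finset.prod_const, Finset.card_univ, Fintype.card_fin]
        congr 1
        ring_nf
  
lemma Wfun_le (m : ℕ) {ε : ℝ} (hε : 0 < ε) : Wfun m ε ≤ ε * (2*ε)^m := by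
  have hvol : volume {w : Fin m → ℝ | ∑ j, w j ^ 2 < ε^2} < ⊤ :=
    lt_of_le_of_lt (vol_S_lt_top m hε) (ENNReal.pow_lt_top ENNReal.ofReal_lt_top)
  have hle : ∀ w : Fin m → ℝ, w ∈ {w : Fin m → ℝ | ∑ j, w j ^ 2 < ε^2} →
      ‖Real.sqrt (ε^2 - ∑ j, w j ^ 2)‖ ≤ ε := by
    intro w _
    rw [Real.norm_eq_abs, abs_of_nonneg (Real.sqrt_nonneg _)]
    have h1 : ε^2 - ∑ j, w j ^ 2 ≤ ε^2 := by
      have : (0:ℝ) ≤ ∑ j, w j ^ 2 := by positivity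
      linarith
    calc Real.sqrt (ε^2 - ∑ j, w j ^ 2) ≤ Real.sqrt (ε^2) := Real.sqrt_le_sqrt h1
      _ = ε := Real.sqrt_sq hε.le
  have hcont : Continuous fun w : Fin m → ℝ => Real.sqrt (ε^2 - ∑ j, w j ^ 2) :=
    ((by fun_prop : Continuous fun w : Fin m → ℝ => (ε^2 - ∑ j, w j ^ 2))).sqrt
  have h2 := norm_setIntegral_le_of_norm_le_const (μ := volume) hvol hle
  have h3 : (volume {w : Fin m → ℝ | ∑ j, w j ^ 2 < ε^2}).toReal ≤ (2*ε)^m := by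
    have := ENNReal.toReal_mono
      (ENNReal.pow_lt_top ENNReal.ofReal_lt_top).ne (vol_S_lt_top m hε)
    calc (volume {w : Fin m → ℝ | ∑ j, w j ^ 2 < ε^2}).toReal
        ≤ ((ENNReal.ofReal (2*ε))^m).toReal := this
      _ = (2*ε)^m := by
          rw [ENNReal.toReal_pow, ENNReal.toReal_ofReal (by positivity)]
  calc Wfun m ε ≤ |Wfun m ε| := le_abs_self _
    _ = ‖Wfun m ε‖ := (Real.norm_eq_abs _).symm
    _ ≤ ε * (volume {w : Fin m → ℝ | ∑ j, w j ^ 2 < ε^2}).toReal := h2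
    _ ≤ ε * (2*ε)^m := by
        exact mul_le_mul_of_nonneg_left h3 hε.le

lemma pow_le_factorial_mul_exp {x : ℝ} (hx : 0 ≤ x) (k : ℕ) :
    x^k ≤ (k.factorial : ℝ) * Real.exp x := by
  have h1 : x^k / (k.factorial : ℝ) ≤ Real.exp x := by
    have h2 := Real.sum_le_exp_of_nonneg hx (k+1)
    refine le_trans ?_ h2
    apply Finset.single_le_sum (f := fun i => x^i / (i.factorial : ℝ))
      (fun i _ => by positivity) (Finset.self_mem_range_succ k)
  have hk : (0:ℝ) < (k.factorial : ℝ) := by positivity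
  calc x^k = (x^k / (k.factorial : ℝ)) * (k.factorial : ℝ) := by field_simp
    _ ≤ Real.exp x * (k.factorial : ℝ) := by
        exact mul_le_mul_of_nonneg_right h1 hk.le
    _ = (k.factorial : ℝ) * Real.exp x := by ring

lemma exp_neg_le {x : ℝ} (hx : 0 < x) (k : ℕ) :
    Real.exp (-x) ≤ (k.factorial : ℝ) / x^k := by
  rw [le_div_iff₀ (pow_pos hx k), Real.exp_neg]
  rw [inv_mul_eq_div, div_le_iff₀ (Real.exp_pos x)]
  calc x^k ≤ (k.factorial : ℝ) * Real.exp x := pow_le_factorial_mul_exp hx.le k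
    _ = (k.factorial : ℝ) * Real.exp x := rfl

lemma gfun_nonneg (m : ℕ) (ε : ℝ) {t : ℝ} (ht : 0 < t) : 0 ≤ gfun m ε t := by
  unfold gfun
  have : (0:ℝ) < Real.sqrt (π*t) := Real.sqrt_pos.2 (by positivity)
  positivity

-- key pointwise bound on (0,∞)
lemma gfun_le (m : ℕ) {ε t : ℝ} (hε : 0 < ε) (ht : 0 < t) :
    gfun m ε t ≤ (((m+2).factorial : ℝ) * 4^(m+2) / (2^(m+1) * Real.sqrt π ^ (m+1)))
      * Real.sqrt t ^ (m+1) / ε^(2*(m+2)) := by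
  have hx : 0 < ε^2/(4*t) := by positivity
  have hu : (0:ℝ) < Real.sqrt t := Real.sqrt_pos.2 ht
  have hv : (0:ℝ) < Real.sqrt π := Real.sqrt_pos.2 pi_pos
  have hut : Real.sqrt t ^ 2 = t := Real.sq_sqrt ht.le
  have hπt : Real.sqrt (π*t) = Real.sqrt π * Real.sqrt t := Real.sqrt_mul pi_pos.le t
  have hDpos : (0:ℝ) < t * (2*Real.sqrt (π*t))^(m+1) := by
    have : (0:ℝ) < Real.sqrt (π*t) := Real.sqrt_pos.2 (by positivity)
    positivity
  have h1 : Real.exp (-ε^2/(4*t)) ≤ ((m+2).factorial : ℝ) / (ε^2/(4*t))^(m+2) := by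
    rw [neg_div]
    exact exp_neg_le hx (m+2)
  have h2 : gfun m ε t ≤ (((m+2).factorial : ℝ) / (ε^2/(4*t))^(m+2)) / (t * (2*Real.sqrt (π*t))^(m+1)) := by
    unfold gfun
    gcongr
  refine le_trans h2 (le_of_eq ?_)
  rw [hπt]
  rw [show t = Real.sqrt t ^ 2 from hut.symm]
  have hkey : Real.sqrt t ^ (m+1) * Real.sqrt t ^ (m+1) = t^(m+1) := by
    rw [← pow_add, show (m+1)+(m+1) = 2*(m+1) by ring, pow_mul, hut]
  rw [Real.sqrt_sq hu.le]
  generalize Real.sqrt t = s at hu ⊢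
  rw [div_pow, mul_pow, mul_pow, mul_pow, ← pow_mul, ← pow_mul]
  field_simp
  ring

lemma gfun_measurable (m : ℕ) (ε : ℝ) : Measurable (gfun m ε) := by
  unfold gfun
  fun_prop

lemma gfun_integrableOn (m : ℕ) {ε : ℝ} (hε : 0 < ε) :
    IntegrableOn (gfun m ε) (Ioc (0:ℝ) 1) := by
  set A := (((m+2).factorial : ℝ) * 4^(m+2) / (2^(m+1) * Real.sqrt π ^ (m+1))) with hA
  apply Integrable.mono' (g := fun _ => A / ε^(2*(m+2))) (integrable_const _)
    ((gfun_measurable m ε).aestronglyMeasurable.restrict)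
  rw [ae_restrict_iff' measurableSet_Ioc]
  apply Filter.Eventually.of_forall
  intro t ht
  rw [Real.norm_eq_abs, abs_of_nonneg (gfun_nonneg m ε ht.1)]
  have h1 := gfun_le m hε ht.1
  have hst : Real.sqrt t ^ (m+1) ≤ 1 := by
    apply pow_le_one₀ (Real.sqrt_nonneg t)
    rw [show (1:ℝ) = Real.sqrt 1 from Real.sqrt_one.symm]
    exact Real.sqrt_le_sqrt ht.2
  have hA0 : 0 < A := by
    have : (0:ℝ) < Real.sqrt π := Real.sqrt_pos.2 pi_pos
    positivity
  calc gfun m ε t ≤ A * Real.sqrt t ^ (m+1) / ε^(2*(m+2)) := h1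
    _ ≤ A * 1 / ε^(2*(m+2)) := by gcongr
    _ = A / ε^(2*(m+2)) := by ring

lemma integral_pow_bound (m : ℕ) {τ : ℝ} (hτ : 0 < τ) (hτ1 : τ ≤ 1) :
    ∫ t in Ioc τ (1:ℝ), 1/(t * Real.sqrt t ^ (m+1))
      ≤ (2/(m+1 : ℝ)) / (Real.sqrt τ ^ (m+1)) := by
  have hcont : ContinuousOn (fun t : ℝ => 1/(t * Real.sqrt t ^ (m+1))) (uIcc τ 1) := by
    rw [uIcc_of_le hτ1]
    apply ContinuousOn.div continuousOn_const
    · exact continuousOn_id.mul ((Real.continuous_sqrt.continuousOn).pow _)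
    · intro x hx
      have hx0 : 0 < x := lt_of_lt_of_le hτ hx.1
      have h2 : 0 < Real.sqrt x := Real.sqrt_pos.2 hx0
      positivity
  have hderiv : ∀ x ∈ uIcc τ (1:ℝ),
      HasDerivAt (fun t : ℝ => -(2/(m+1 : ℝ)) * (Real.sqrt t ^ (m+1))⁻¹)
        (1/(x * Real.sqrt x ^ (m+1))) x := by
    intro x hx
    rw [uIcc_of_le hτ1] at hx
    have hx0 : 0 < x := lt_of_lt_of_le hτ hx.1
    have hsx : 0 < Real.sqrt x := Real.sqrt_pos.2 hx0
    have h1 := (Real.hasDerivAt_sqrt hx0.ne').pow (m+1)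
    have h2 := h1.inv (pow_ne_zero _ hsx.ne')
    have h3 := h2.const_mul (-(2/(m+1 : ℝ)))
    refine h3.congr_deriv ?_
    have hxx : Real.sqrt x ^ 2 = x := Real.sq_sqrt hx0.le
    have hm1 : ((m:ℝ) + 1) ≠ 0 := by positivity
    simp only [Pi.pow_apply, Nat.add_sub_cancel, Nat.cast_add, Nat.cast_one]
    generalize Real.sqrt x = s at hsx hxx ⊢
    subst hxx
    field_simp
    ring
  have hFTC := intervalIntegral.integral_eq_sub_of_hasDerivAt hderiv
    (hcont.intervalIntegrable)
  rw [← intervalIntegral.integral_of_le hτ1, hFTC]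
  have h4 : (0:ℝ) ≤ 2 * ((m:ℝ)+1)⁻¹ := by positivity
  rw [Real.sqrt_one, one_pow, div_eq_mul_inv (2 : ℝ)]
  have h5 : 0 < (Real.sqrt τ ^ (m+1))⁻¹ := by
    have : 0 < Real.sqrt τ := Real.sqrt_pos.2 hτ
    positivity
  simp only [inv_one, mul_one, div_eq_mul_inv]
  nlinarith [h4, h5, mul_nonneg h4 h5.le]

lemma exists_C0 (m : ℕ) : ∃ C0 : ℝ, 0 < C0 ∧ ∀ ε : ℝ, 0 < ε →
    (ε * (2*ε)^m) * ∫ t in Ioc (0:ℝ) 1, gfun m ε t ≤ C0 := by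
  have hsπ : (0:ℝ) < Real.sqrt π := Real.sqrt_pos.2 pi_pos
  set A := (((m+2).factorial : ℝ) * 4^(m+2) / (2^(m+1) * Real.sqrt π ^ (m+1))) with hA
  have hA0 : 0 < A := by positivity
  set B := (1/(2^(m+1) * Real.sqrt π ^ (m+1))) * (2/(m+1 : ℝ)) with hB
  have hB0 : 0 < B := by positivity
  refine ⟨2^m * A + 2^m * B + 1, by positivity, ?_⟩
  intro ε hε
  set τ := min (ε^2) 1 with hτdef
  have hτ0 : 0 < τ := lt_min (by positivity) one_pos
  have hτ1 : τ ≤ 1 := min_le_right _ _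
  have hτε : τ ≤ ε^2 := min_le_left _ _
  have hsτ : Real.sqrt τ ≤ ε := by
    calc Real.sqrt τ ≤ Real.sqrt (ε^2) := Real.sqrt_le_sqrt hτε
      _ = ε := Real.sqrt_sq hε.le
  have hsτ0 : 0 < Real.sqrt τ := Real.sqrt_pos.2 hτ0
  have hint : IntegrableOn (gfun m ε) (Ioc (0:ℝ) 1) := gfun_integrableOn m hε
  have hεf : (0:ℝ) < ε * (2*ε)^m := by positivity
  -- split the integral
  have hsplit : ∫ t in Ioc (0:ℝ) 1, gfun m ε t
      = (∫ t in Ioc (0:ℝ) τ, gfun m ε t) + ∫ t in Ioc τ 1, gfun m ε t := by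
    rw [← setIntegral_union (Set.Ioc_disjoint_Ioc_of_le le_rfl) measurableSet_Ioc
      (hint.mono_set (Ioc_subset_Ioc le_rfl hτ1))
      (hint.mono_set (Ioc_subset_Ioc hτ0.le le_rfl)),
      Set.Ioc_union_Ioc_eq_Ioc hτ0.le hτ1]
  -- piece 1
  have hp1 : ∫ t in Ioc (0:ℝ) τ, gfun m ε t
      ≤ (A * Real.sqrt τ ^ (m+1) / ε^(2*(m+2))) * τ := by
    have hb : ∀ x ∈ Ioc (0:ℝ) τ, ‖gfun m ε x‖ ≤ A * Real.sqrt τ ^ (m+1) / ε^(2*(m+2)) := by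
      intro x hx
      rw [Real.norm_eq_abs, abs_of_nonneg (gfun_nonneg m ε hx.1)]
      refine le_trans (gfun_le m hε hx.1) ?_
      gcongr
      exact hx.2
    have h2 := norm_setIntegral_le_of_norm_le_const (μ := volume)
      (by rw [Real.volume_Ioc]; exact ENNReal.ofReal_lt_top) hb
    rw [Real.volume_real_Ioc, max_eq_left (by linarith), sub_zero] at h2
    calc ∫ t in Ioc (0:ℝ) τ, gfun m ε t ≤ ‖∫ t in Ioc (0:ℝ) τ, gfun m ε t‖ :=
          le_abs_self _
      _ ≤ (A * Real.sqrt τ ^ (m+1) / ε^(2*(m+2))) * τ := h2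
  -- piece 2
  have hp2 : ∫ t in Ioc τ 1, gfun m ε t
      ≤ (1/(2^(m+1) * Real.sqrt π ^ (m+1))) * ((2/(m+1:ℝ)) / (Real.sqrt τ ^ (m+1))) := by
    have hmono : ∀ x ∈ Ioc τ (1:ℝ), gfun m ε x
        ≤ (1/(2^(m+1) * Real.sqrt π ^ (m+1))) * (1/(x * Real.sqrt x ^ (m+1))) := by
      intro x hx
      have hx0 : 0 < x := hτ0.trans hx.1
      have hsx : 0 < Real.sqrt x := Real.sqrt_pos.2 hx0
      have hDpos : (0:ℝ) < x * (2*Real.sqrt (π*x))^(m+1) := by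
        have : (0:ℝ) < Real.sqrt (π*x) := Real.sqrt_pos.2 (by positivity)
        positivity
      have h1 : gfun m ε x ≤ 1 / (x * (2*Real.sqrt (π*x))^(m+1)) := by
        unfold gfun
        gcongr
        rw [show -ε^2/(4*x) = -(ε^2/(4*x)) from by ring]
        exact Real.exp_le_one_iff.2 (neg_nonpos.2 (by positivity))
      refine le_trans h1 (le_of_eq ?_)
      rw [Real.sqrt_mul pi_pos.le]
      field_simp
      ring
    have hrint : IntegrableOn (fun x : ℝ => (1/(2^(m+1) * Real.sqrt π ^ (m+1)))
        * (1/(x * Real.sqrt x ^ (m+1)))) (Ioc τ 1) := by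
      apply IntegrableOn.mono_set (t := Icc τ 1) _ Ioc_subset_Icc_self
      apply ContinuousOn.integrableOn_compact isCompact_Icc
      apply ContinuousOn.mul continuousOn_const
      apply ContinuousOn.div continuousOn_const
      · exact continuousOn_id.mul ((Real.continuous_sqrt.continuousOn).pow _)
      · intro x hx
        have hx0 : 0 < x := lt_of_lt_of_le hτ0 hx.1
        have hsx : 0 < Real.sqrt x := Real.sqrt_pos.2 hx0
        positivity
    calc ∫ t in Ioc τ 1, gfun m ε t
        ≤ ∫ t in Ioc τ 1, (1/(2^(m+1) * Real.sqrt π ^ (m+1)))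
            * (1/(t * Real.sqrt t ^ (m+1))) :=
          setIntegral_mono_on (hint.mono_set (Ioc_subset_Ioc hτ0.le le_rfl)) hrint
            measurableSet_Ioc hmono
      _ = (1/(2^(m+1) * Real.sqrt π ^ (m+1)))
            * ∫ t in Ioc τ 1, 1/(t * Real.sqrt t ^ (m+1)) := integral_const_mul _ _
      _ ≤ (1/(2^(m+1) * Real.sqrt π ^ (m+1))) * ((2/(m+1:ℝ)) / (Real.sqrt τ ^ (m+1))) := by
          gcongr
          exact integral_pow_bound m hτ0 hτ1
  -- combine piece 1
  have key1 : ε^(m+1) * (Real.sqrt τ ^ (m+1) * τ) ≤ ε^(2*(m+2)) * 1 := by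
    have h1 : Real.sqrt τ ^ (m+1) ≤ ε^(m+1) := pow_le_pow_left₀ (Real.sqrt_nonneg τ) hsτ _
    calc ε^(m+1) * (Real.sqrt τ ^ (m+1) * τ) ≤ ε^(m+1) * (ε^(m+1) * ε^2) := by
          gcongr
      _ = ε^(2*(m+2)) * 1 := by ring
  have hc1 : (ε * (2*ε)^m) * ((A * Real.sqrt τ ^ (m+1) / ε^(2*(m+2))) * τ) ≤ 2^m * A := by
    rw [show (ε * (2*ε)^m) * ((A * Real.sqrt τ ^ (m+1) / ε^(2*(m+2))) * τ)
        = 2^m * A * ((ε^(m+1) * (Real.sqrt τ ^ (m+1) * τ))/ε^(2*(m+2))) from by ring]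
    have h2 : (ε^(m+1) * (Real.sqrt τ ^ (m+1) * τ))/ε^(2*(m+2)) ≤ 1 := by
      rw [div_le_one (by positivity)]
      simpa using key1
    calc 2^m * A * ((ε^(m+1) * (Real.sqrt τ ^ (m+1) * τ))/ε^(2*(m+2)))
        ≤ 2^m * A * 1 := by gcongr
      _ = 2^m * A := by ring
  -- combine piece 2
  have hc2' : (ε * (2*ε)^m) * (∫ t in Ioc τ 1, gfun m ε t) ≤ 2^m * B := by
    by_cases hε1 : ε^2 ≤ 1
    · have hτeq : τ = ε^2 := min_eq_left hε1
      have hsq : Real.sqrt τ = ε := by rw [hτeq, Real.sqrt_sq hε.le]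
      have h3 : (ε * (2*ε)^m) * ((1/(2^(m+1) * Real.sqrt π ^ (m+1)))
          * ((2/(m+1:ℝ)) / (Real.sqrt τ ^ (m+1)))) = 2^m * B := by
        rw [hsq, hB]
        field_simp
        ring
      calc (ε * (2*ε)^m) * (∫ t in Ioc τ 1, gfun m ε t)
          ≤ (ε * (2*ε)^m) * ((1/(2^(m+1) * Real.sqrt π ^ (m+1)))
            * ((2/(m+1:ℝ)) / (Real.sqrt τ ^ (m+1)))) :=
            mul_le_mul_of_nonneg_left hp2 hεf.le
        _ = 2^m * B := h3
    · have hτeq : τ = 1 := min_eq_right (by nlinarith)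
      rw [hτeq, Set.Ioc_self, Measure.restrict_empty, integral_zero_measure, mul_zero]
      positivity
  -- final assembly
  have hfin : (ε * (2*ε)^m) * ∫ t in Ioc (0:ℝ) 1, gfun m ε t
      ≤ 2^m * A + 2^m * B := by
    rw [hsplit, mul_add]
    refine add_le_add ?_ hc2'
    calc (ε * (2*ε)^m) * (∫ t in Ioc (0:ℝ) τ, gfun m ε t)
        ≤ (ε * (2*ε)^m) * ((A * Real.sqrt τ ^ (m+1) / ε^(2*(m+2))) * τ) :=
          mul_le_mul_of_nonneg_left hp1 hεf.le
      _ ≤ 2^m * A := hc1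
  linarith [hfin]

end AlphaAux

open AlphaAux

/-- For `n ≥ 1` and `φ ∈ L^∞((0,∞))`, the function `α` is bounded on `(0,∞)`. -/
theorem alphaFun_bounded (n : ℕ) (hn : 0 < n) (φ : ℝ → ℝ)
    (hφ : MemLp φ ⊤ (volume.restrict (Ioi (0 : ℝ)))) :
    ∃ C > (0 : ℝ), ∀ ε : ℝ, 0 < ε → |alphaFun n hn φ ε| ≤ C := by
  obtain ⟨m, rfl⟩ : ∃ m, n = m + 1 := ⟨n - 1, (Nat.succ_pred_eq_of_pos hn).symm⟩
  have hμ : eLpNormEssSup φ (volume.restrict (Ioi (0:ℝ))) < ⊤ := by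
    have h := hφ.2
    rwa [eLpNorm_exponent_top] at h
  set M := (eLpNormEssSup φ (volume.restrict (Ioi (0:ℝ)))).toReal with hM
  have hM0 : 0 ≤ M := ENNReal.toReal_nonneg
  have hMae : ∀ᵐ t ∂(volume.restrict (Ioi (0:ℝ))), |φ t| ≤ M := by
    filter_upwards [ae_le_eLpNormEssSup (f := φ) (μ := volume.restrict (Ioi (0:ℝ)))] with t ht
    have h2 : ((‖φ t‖₊ : ℝ≥0∞)).toReal ≤ M := ENNReal.toReal_mono hμ.ne ht
    simpa [Real.norm_eq_abs] using h2
  have hMae1 : ∀ᵐ t ∂(volume.restrict (Ioc (0:ℝ) 1)), |φ t| ≤ M :=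
    ae_restrict_of_ae_restrict_of_subset Ioc_subset_Ioi_self hMae
  obtain ⟨C0, hC00, hC0⟩ := exists_C0 m
  refine ⟨M * C0 + 1, by positivity, ?_⟩
  intro ε hε
  have hrw : alphaFun (m+1) hn φ ε
      = ∫ t in Ioc (0:ℝ) 1, φ t * (-(gfun m ε t) * Wfun m ε) := by
    unfold alphaFun
    apply setIntegral_congr_fun measurableSet_Ioc
    intro t htm
    have hh := inner_integral_eq (m := m) hn htm.1 hε
    simp only [hh]
    rfl
  have hφm : AEStronglyMeasurable φ (volume.restrict (Ioc (0:ℝ) 1)) :=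
    hφ.1.mono_measure (Measure.restrict_mono Ioc_subset_Ioi_self le_rfl)
  have hgm : AEStronglyMeasurable (fun t => -(gfun m ε t) * Wfun m ε)
      (volume.restrict (Ioc (0:ℝ) 1)) :=
    (((gfun_measurable m ε).neg).mul_const _).aestronglyMeasurable.restrict
  have hWnn := Wfun_nonneg m ε
  have hdom : ∀ᵐ t ∂(volume.restrict (Ioc (0:ℝ) 1)),
      ‖φ t * (-(gfun m ε t) * Wfun m ε)‖ ≤ M * Wfun m ε * gfun m ε t := by
    filter_upwards [hMae1, ae_restrict_mem measurableSet_Ioc] with t h1 h2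
    have hg0 : 0 ≤ gfun m ε t := gfun_nonneg m ε h2.1
    rw [norm_mul, norm_mul, norm_neg, Real.norm_eq_abs, Real.norm_eq_abs, Real.norm_eq_abs,
      abs_of_nonneg hg0, abs_of_nonneg hWnn]
    calc |φ t| * (gfun m ε t * Wfun m ε) ≤ M * (gfun m ε t * Wfun m ε) :=
          mul_le_mul_of_nonneg_right h1 (by positivity)
      _ = M * Wfun m ε * gfun m ε t := by ring
  have hbint : Integrable (fun t => M * Wfun m ε * gfun m ε t)
      (volume.restrict (Ioc (0:ℝ) 1)) := (gfun_integrableOn m hε).const_mul _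
  have hnorm := norm_integral_le_of_norm_le hbint hdom
  have h2 : ∫ t in Ioc (0:ℝ) 1, M * Wfun m ε * gfun m ε t
      = M * Wfun m ε * ∫ t in Ioc (0:ℝ) 1, gfun m ε t := integral_const_mul _ _
  have h3 : 0 ≤ ∫ t in Ioc (0:ℝ) 1, gfun m ε t :=
    setIntegral_nonneg measurableSet_Ioc (fun t ht => gfun_nonneg m ε ht.1)
  have h4 : Wfun m ε * ∫ t in Ioc (0:ℝ) 1, gfun m ε t ≤ C0 := by
    calc Wfun m ε * ∫ t in Ioc (0:ℝ) 1, gfun m ε t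
        ≤ (ε * (2*ε)^m) * ∫ t in Ioc (0:ℝ) 1, gfun m ε t :=
          mul_le_mul_of_nonneg_right (Wfun_le m hε) h3
      _ ≤ C0 := hC0 ε hε
  calc |alphaFun (m+1) hn φ ε|
      = ‖∫ t in Ioc (0:ℝ) 1, φ t * (-(gfun m ε t) * Wfun m ε)‖ := by
        rw [hrw, Real.norm_eq_abs]
    _ ≤ ∫ t in Ioc (0:ℝ) 1, M * Wfun m ε * gfun m ε t := hnorm
    _ = M * (Wfun m ε * ∫ t in Ioc (0:ℝ) 1, gfun m ε t) := by rw [h2]; ring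
    _ ≤ M * C0 := mul_le_mul_of_nonneg_left h4 hM0
    _ ≤ M * C0 + 1 := by linarith
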